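/- Let E be a Dedekind complete vector lattice and T an orthomorphism of E. If a net (x_α) in E is unbounded order convergent to 0, then (Tx_α) is unbounded order convergent to 0 in E. -/

import Mathlib

variable (E : Type*) [AddCommGroup E] [ConditionallyCompleteLattice E] [Module ℝ E]
  [CovariantClass E E (· + ·) (· ≤ ·)] [PosSMulMono ℝ E]

/-- The order on order bounded operators: `A ≤ B` iff `A x ≤ B x` for all `x ≥ 0`. -/
def opLE (A B : E →ₗ[ℝ] E) : Prop := ∀ x : E, 0 ≤ x → A x ≤ B x

/-- An operator is order bounded when it maps order bounded sets to order bounded sets. -/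
def IsOrderBoundedOp (T : E →ₗ[ℝ] E) : Prop :=
  ∀ a b : E, ∃ c d : E, ∀ x : E, a ≤ x → x ≤ b → c ≤ T x ∧ T x ≤ d

/-- Band preserving: `T x` lies in the band generated by `x`; equivalently `T x ⊥ y`
whenever `x ⊥ y`. -/
def IsBandPreserving (T : E →ₗ[ℝ] E) : Prop :=
  ∀ x y : E, |x| ⊓ |y| = 0 → |T x| ⊓ |y| = 0

/-- An orthomorphism is an order bounded band preserving linear operator. -/
def IsOrthomorphism (T : E →ₗ[ℝ] E) : Prop :=
  IsOrderBoundedOp E T ∧ IsBandPreserving E T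

/-- Membership in the band generated by a set `S` (in an Archimedean vector lattice this is
the double disjoint complement of `S`). -/
def memBandGen (S : Set E) (w : E) : Prop :=
  ∀ u : E, (∀ s ∈ S, |u| ⊓ |s| = 0) → |u| ⊓ |w| = 0

/-- `P` is the band projection onto the band `B`: it maps into `B` and `x - P x` is
disjoint from `B` for every `x`. -/
def IsBandProjectionOnto (B : Set E) (P : E →ₗ[ℝ] E) : Prop :=
  (∀ x : E, P x ∈ B) ∧ (∀ x : E, ∀ b ∈ B, |x - P x| ⊓ |b| = 0)

/-- Order convergence of a net: there is a downward directed set `D` with infimum `0`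
such that the net is eventually dominated by every member of `D`. -/
def OrderConvNet {ι : Type*} [Preorder ι] (y : ι → E) (l : E) : Prop :=
  ∃ D : Set E, D.Nonempty ∧ DirectedOn (· ≥ ·) D ∧ IsGLB D 0 ∧
    ∀ d ∈ D, ∃ i₀ : ι, ∀ i : ι, i₀ ≤ i → |y i - l| ≤ d

/-- Unbounded order convergence of a net. -/
def UOConvNet {ι : Type*} [Preorder ι] (y : ι → E) (l : E) : Prop :=
  ∀ u : E, 0 ≤ u → OrderConvNet E (fun i => |y i - l| ⊓ u) 0

/-- Order convergence of a net of operators, in the operator order of the order bounded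
operators: there is a downward directed set `D` of operators whose infimum among the
order bounded operators is `0`, eventually dominating `|T i - L|`. -/
def OpOrderConvNet {ι : Type*} [Preorder ι] (T : ι → E →ₗ[ℝ] E) (L : E →ₗ[ℝ] E) : Prop :=
  ∃ D : Set (E →ₗ[ℝ] E), D.Nonempty ∧
    DirectedOn (fun A B => opLE E B A) D ∧
    (∀ d ∈ D, opLE E 0 d) ∧
    (∀ C : E →ₗ[ℝ] E, IsOrderBoundedOp E C → (∀ d ∈ D, opLE E C d) → opLE E C 0) ∧
    ∀ d ∈ D, ∃ i₀ : ι, ∀ i : ι, i₀ ≤ i → opLE E (L - T i) d ∧ opLE E (T i - L) d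


set_option linter.unusedSectionVars false

lemma aux_smul_sup (c : ℝ) (hc : 0 < c) (a b : E) : c • (a ⊔ b) = c • a ⊔ c • b := by
  refine le_antisymm ?_ (sup_le (smul_le_smul_of_nonneg_left le_sup_left hc.le)
    (smul_le_smul_of_nonneg_left le_sup_right hc.le))
  have h : a ⊔ b ≤ c⁻¹ • (c • a ⊔ c • b) := by
    refine sup_le ?_ ?_
    · have := smul_le_smul_of_nonneg_left (le_sup_left : c • a ≤ c • a ⊔ c • b)
        (inv_nonneg.mpr hc.le)
      rwa [inv_smul_smul₀ hc.ne'] at this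
    · have := smul_le_smul_of_nonneg_left (le_sup_right : c • b ≤ c • a ⊔ c • b)
        (inv_nonneg.mpr hc.le)
      rwa [inv_smul_smul₀ hc.ne'] at this
  have h2 := smul_le_smul_of_nonneg_left h hc.le
  rwa [smul_inv_smul₀ hc.ne'] at h2

lemma aux_smul_inf (c : ℝ) (hc : 0 < c) (a b : E) : c • (a ⊓ b) = c • a ⊓ c • b := by
  refine le_antisymm (le_inf (smul_le_smul_of_nonneg_left inf_le_left hc.le)
    (smul_le_smul_of_nonneg_left inf_le_right hc.le)) ?_
  have h : c⁻¹ • (c • a ⊓ c • b) ≤ a ⊓ b := by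
    refine le_inf ?_ ?_
    · have := smul_le_smul_of_nonneg_left (inf_le_left : c • a ⊓ c • b ≤ c • a)
        (inv_nonneg.mpr hc.le)
      rwa [inv_smul_smul₀ hc.ne'] at this
    · have := smul_le_smul_of_nonneg_left (inf_le_right : c • a ⊓ c • b ≤ c • b)
        (inv_nonneg.mpr hc.le)
      rwa [inv_smul_smul₀ hc.ne'] at this
  have h2 := smul_le_smul_of_nonneg_left h hc.le
  rwa [smul_inv_smul₀ hc.ne'] at h2

lemma aux_abs_smul (c : ℝ) (hc : 0 ≤ c) (a : E) : |c • a| = c • |a| := by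
  rcases hc.eq_or_lt with h | h
  · simp [← h]
  · refine le_antisymm (abs_le'.mpr ⟨?_, ?_⟩) ?_
    · exact smul_le_smul_of_nonneg_left (le_abs_self a) h.le
    · rw [← smul_neg]; exact smul_le_smul_of_nonneg_left (neg_le_abs a) h.le
    · have h1 : a ≤ c⁻¹ • |c • a| := by
        have := smul_le_smul_of_nonneg_left (le_abs_self (c • a)) (inv_nonneg.mpr h.le)
        rwa [inv_smul_smul₀ h.ne'] at this
      have h2 : -a ≤ c⁻¹ • |c • a| := by
        have := smul_le_smul_of_nonneg_left (neg_le_abs (c • a)) (inv_nonneg.mpr h.le)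
        rwa [smul_neg, inv_smul_smul₀ h.ne'] at this
      have h3 : |a| ≤ c⁻¹ • |c • a| := abs_le'.mpr ⟨h1, h2⟩
      have h4 := smul_le_smul_of_nonneg_left h3 h.le
      rwa [smul_inv_smul₀ h.ne'] at h4

lemma aux_inf_add (f p r : E) (hf : 0 ≤ f) (hp : 0 ≤ p) (hr : 0 ≤ r) :
    f ⊓ (p + r) ≤ f ⊓ p + f ⊓ r := by
  have h2 : f ⊓ p + f ⊓ r = (f ⊓ p + f) ⊓ (f ⊓ p + r) := add_inf _ _ _
  rw [h2]
  refine le_inf (inf_le_left.trans (le_add_of_nonneg_left (le_inf hf hp))) ?_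
  have h3 : f ⊓ p + r = (f + r) ⊓ (p + r) := by
    rw [add_comm, add_inf, add_comm r f, add_comm r p]
  rw [h3]
  exact le_inf (inf_le_left.trans (le_add_of_nonneg_right hr)) inf_le_right

lemma aux_disj_smul (s t : E) (hs : 0 ≤ s) (ht : 0 ≤ t) (h : s ⊓ t = 0) (c : ℝ) (hc : 0 ≤ c) :
    s ⊓ c • t = 0 := by
  have hn : ∀ k : ℕ, s ⊓ ((k : ℝ) • t) = 0 := by
    intro k; induction k with
    | zero => rw [Nat.cast_zero, zero_smul]; exact inf_eq_right.mpr hs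
    | succ k ih =>
      have hksm : (0:E) ≤ (k:ℝ) • t := smul_nonneg (Nat.cast_nonneg k) ht
      refine le_antisymm ?_ (le_inf hs (smul_nonneg (Nat.cast_nonneg _) ht))
      have hcast : ((k+1 : ℕ):ℝ) • t = (k:ℝ) • t + t := by push_cast; rw [add_smul, one_smul]
      rw [hcast]
      calc s ⊓ ((k:ℝ) • t + t) ≤ s ⊓ ((k:ℝ) • t) + s ⊓ t := aux_inf_add E s _ t hs hksm ht
        _ = 0 := by rw [ih, h, add_zero]
  obtain ⟨k, hk⟩ := exists_nat_ge c
  have hle : c • t ≤ (k:ℝ) • t := by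
    have h0 : (0:E) ≤ ((k:ℝ) - c) • t := smul_nonneg (by linarith) ht
    rw [sub_smul] at h0
    exact sub_nonneg.mp h0
  refine le_antisymm ?_ (le_inf hs (smul_nonneg hc ht))
  calc s ⊓ c • t ≤ s ⊓ ((k:ℝ) • t) := inf_le_inf_left s hle
    _ = 0 := hn k

lemma aux_trunc (a d : E) (hd : 0 ≤ d) (c : ℝ) (hc : 0 ≤ c) : a ⊓ (c • (d - a)⁺) ≤ d := by
  have hneg : (a - d)⁻ = (d - a)⁺ := by rw [negPart_def, posPart_def, neg_sub]
  have hdisj0 : (a - d)⁺ ⊓ (d - a)⁺ = 0 := by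
    rw [← hneg]; exact posPart_inf_negPart_eq_zero _
  have hdisj : (a - d)⁺ ⊓ (c • (d - a)⁺) = 0 :=
    aux_disj_smul E _ _ (posPart_nonneg _) (posPart_nonneg _) hdisj0 c hc
  have h1 : a ≤ d + (a - d)⁺ := sub_le_iff_le_add'.mp (le_posPart (a - d))
  calc a ⊓ (c • (d - a)⁺) ≤ (d + (a - d)⁺) ⊓ (d + c • (d - a)⁺) :=
        inf_le_inf h1 (le_add_of_nonneg_left hd)
    _ = d + ((a - d)⁺ ⊓ c • (d - a)⁺) := (add_inf _ _ _).symm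
    _ = d := by rw [hdisj, add_zero]

lemma aux_arch (w m : E) (hm : 0 ≤ m) (h : ∀ n : ℕ, ((n:ℝ)+1) • w ≤ m) : w ≤ 0 := by
  set S : Set E := Set.range (fun n : ℕ => ((n:ℝ)+1) • w) with hS
  have hne : S.Nonempty := ⟨_, ⟨0, rfl⟩⟩
  have hbdd : BddAbove S := ⟨m, by rintro _ ⟨n, rfl⟩; exact h n⟩
  have key : ∀ n : ℕ, ((n:ℝ)+1) • w ≤ sSup S - w := by
    intro n
    have h2 : (((n+1:ℕ):ℝ)+1) • w ≤ sSup S := le_csSup hbdd ⟨n+1, rfl⟩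
    have h3 : (((n+1:ℕ):ℝ)+1) • w = ((n:ℝ)+1) • w + w := by
      push_cast
      rw [show (n:ℝ)+1+1 = ((n:ℝ)+1)+1 by ring, add_smul, one_smul]
    rw [h3] at h2
    exact le_sub_iff_add_le.mpr h2
  have h4 : sSup S ≤ sSup S - w := csSup_le hne (by rintro _ ⟨n, rfl⟩; exact key n)
  exact (add_le_iff_nonpos_right _).mp (le_sub_iff_add_le.mp h4)

set_option maxHeartbeats 1000000 in
lemma aux_core (T : E →ₗ[ℝ] E) (hT : IsBandPreserving E T) (u m : E) (hu : 0 ≤ u)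
    (hm : ∀ z : E, |z| ≤ u → |T z| ≤ m) (d : E) (hd : 0 ≤ d) (n : ℕ) (x : E)
    (hxd : |x| ⊓ u ≤ d) :
    |T x| ⊓ u ≤ ((n:ℝ)+1)⁻¹ • m + (2*((n:ℝ)+1)) • d := by
  have hn1 : (0:ℝ) < (n:ℝ)+1 := by positivity
  set ε : ℝ := ((n:ℝ)+1)⁻¹ with hεdef
  have hε : 0 < ε := by positivity
  have hε1 : ε ≤ 1 := by
    rw [hεdef]
    have h1n : (1:ℝ) ≤ (n:ℝ)+1 := by
      have : (0:ℝ) ≤ (n:ℝ) := n.cast_nonneg; linarith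
    calc ((n:ℝ)+1)⁻¹ ≤ 1⁻¹ := by
          apply inv_anti₀ one_pos h1n
      _ = 1 := inv_one
  set δ : ℝ := ε/2 with hδdef
  have hδ : 0 < δ := by positivity
  set a : E := ε • u with hadef
  have ha0 : 0 ≤ a := smul_nonneg hε.le hu
  have hau : a ≤ u := by
    have h1 : (0:E) ≤ (1-ε) • u := smul_nonneg (by linarith) hu
    rw [sub_smul, one_smul] at h1
    exact sub_nonneg.mp h1
  set x₁ : E := (x ⊓ a) ⊔ (-a) with hx₁def
  set x₂ : E := x - x₁ with hx₂def
  have hx₁ : |x₁| ≤ a := by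
    refine abs_le'.mpr ⟨sup_le inf_le_right ((neg_nonpos.mpr ha0).trans ha0), ?_⟩
    exact neg_le.mp (le_sup_right : -a ≤ x₁)
  have hTx₁ : |T x₁| ≤ ε • m := by
    have hz : |ε⁻¹ • x₁| ≤ u := by
      rw [aux_abs_smul E ε⁻¹ (inv_nonneg.mpr hε.le) x₁]
      have h2 := smul_le_smul_of_nonneg_left hx₁ (inv_nonneg.mpr hε.le)
      rw [hadef, inv_smul_smul₀ hε.ne'] at h2
      exact h2
    have hx1eq : T x₁ = ε • T (ε⁻¹ • x₁) := by
      rw [← map_smul, smul_inv_smul₀ hε.ne']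
    rw [hx1eq, aux_abs_smul E ε hε.le]
    exact smul_le_smul_of_nonneg_left (hm _ hz) hε.le
  set g : E := (|x| - a)⁺ with hgdef
  have hg0 : 0 ≤ g := posPart_nonneg _
  have hx₂g : |x₂| ≤ g := by
    have h2 : x₂ ≤ x - (x ⊓ a) := sub_le_sub_left le_sup_left x
    have h3 : x - (x ⊓ a) = (x - a)⁺ := by
      rw [sub_inf, sub_self, posPart_def]; exact sup_comm _ _
    have h1' : x₂ ≤ g := by
      calc x₂ ≤ x - (x ⊓ a) := h2
        _ = (x - a)⁺ := h3
        _ ≤ g := posPart_mono (sub_le_sub_right (le_abs_self x) a)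
    have h5 : -x₂ = ((x ⊓ a) ⊔ (-a)) - x := by rw [hx₂def, hx₁def]; abel
    have h6 : ((x ⊓ a) ⊔ (-a)) - x ≤ (x ⊔ (-a)) - x :=
      sub_le_sub_right (sup_le_sup_right inf_le_left _) x
    have h7 : (x ⊔ (-a)) - x = (-x - a)⁺ := by
      rw [sub_eq_add_neg, add_comm, add_sup, neg_add_cancel, posPart_def, ← sub_eq_add_neg]
      exact sup_comm _ _
    have h4' : -x₂ ≤ g := by
      calc -x₂ = ((x ⊓ a) ⊔ (-a)) - x := h5
        _ ≤ (x ⊔ (-a)) - x := h6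
        _ = (-x - a)⁺ := h7
        _ ≤ g := posPart_mono (sub_le_sub_right (neg_le_abs x) a)
    exact abs_le'.mpr ⟨h1', h4'⟩
  set b' : E := δ • u with hb'def
  have hb'0 : 0 ≤ b' := smul_nonneg hδ.le hu
  set e : E := (d - b')⁺ with hedef
  have he0 : 0 ≤ e := posPart_nonneg _
  set S : Set E := Set.range (fun k : ℕ => u ⊓ ((k:ℝ) • e)) with hSdef
  have hSne : S.Nonempty := ⟨_, ⟨0, rfl⟩⟩
  have hSbdd : BddAbove S := ⟨u, by rintro _ ⟨k, rfl⟩; exact inf_le_left⟩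
  set p : E := sSup S with hpdef
  have hpu : p ≤ u := csSup_le hSne (by rintro _ ⟨k, rfl⟩; exact inf_le_left)
  have hp0 : 0 ≤ p := by
    have h0 : u ⊓ (((0:ℕ):ℝ) • e) ∈ S := ⟨0, rfl⟩
    have h1 := le_csSup hSbdd h0
    rwa [Nat.cast_zero, zero_smul, inf_eq_right.mpr hu] at h1
  set r : E := u - p with hrdef
  have hr0 : 0 ≤ r := sub_nonneg.mpr hpu
  have hru : r ≤ u := sub_le_self u hp0
  have hupr : u = p + r := by rw [hrdef]; abel
  have hre : r ⊓ e = 0 := by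
    set q : E := r ⊓ e with hqdef
    have hq0 : 0 ≤ q := le_inf hr0 he0
    have key : ∀ k : ℕ, u ⊓ ((k:ℝ) • e) ≤ p - q := by
      intro k
      have hmem : u ⊓ (((k+1:ℕ)):ℝ) • e ∈ S := ⟨k+1, rfl⟩
      have h2 : u ⊓ (((k:ℝ)+1) • e) ≤ p := by
        have h2' := le_csSup hSbdd hmem
        rwa [Nat.cast_add, Nat.cast_one] at h2'
      have h1 : (u ⊓ ((k:ℝ) • e)) + q ≤ u ⊓ (((k:ℝ)+1) • e) := by
        refine le_inf ?_ ?_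
        · have hk : u ⊓ ((k:ℝ) • e) ≤ p := le_csSup hSbdd ⟨k, rfl⟩
          calc (u ⊓ ((k:ℝ) • e)) + q ≤ p + r := add_le_add hk inf_le_left
            _ = u := hupr.symm
        · calc (u ⊓ ((k:ℝ) • e)) + q ≤ (k:ℝ) • e + e := add_le_add inf_le_right inf_le_right
            _ = ((k:ℝ)+1) • e := by rw [add_smul, one_smul]
      exact le_sub_iff_add_le.mpr (h1.trans h2)
    have h4 : p ≤ p - q := csSup_le hSne (by rintro _ ⟨k, rfl⟩; exact key k)
    exact le_antisymm ((add_le_iff_nonpos_right _).mp (le_sub_iff_add_le.mp h4)) hq0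
  set g' : E := (a - |x|)⁺ with hg'def
  have hg'0 : 0 ≤ g' := posPart_nonneg _
  have hgg' : g ⊓ g' = 0 := by
    have hneg : (|x| - a)⁻ = (a - |x|)⁺ := by rw [negPart_def, posPart_def, neg_sub]
    rw [hgdef, hg'def, ← hneg]
    exact posPart_inf_negPart_eq_zero _
  have hde : d ≤ e + b' := sub_le_iff_le_add.mp (le_posPart (d - b'))
  have hhalf : b' ≤ e + g' := by
    have h2 : a ≤ |x| + g' := sub_le_iff_le_add'.mp (le_posPart (a - |x|))
    have h3 : (|x| ⊓ u) + g' = (|x| + g') ⊓ (u + g') := by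
      rw [add_comm, add_inf, add_comm g' |x|, add_comm g' u]
    have h1 : a ≤ (|x| ⊓ u) + g' := by
      rw [h3]; exact le_inf h2 (hau.trans (le_add_of_nonneg_right hg'0))
    have h4 : a ≤ (e + b') + g' := h1.trans (add_le_add_left (hxd.trans hde) g')
    have h5 : a = b' + b' := by
      rw [hadef, hb'def, ← add_smul, hδdef]; norm_num
    rw [h5] at h4
    have h6 : b' + b' ≤ (e + g') + b' := by
      calc b' + b' ≤ (e + b') + g' := h4
        _ = (e + g') + b' := by abel
    exact (add_le_add_iff_right b').mp h6
  have hgr : g ⊓ r = 0 := by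
    set h : E := g ⊓ r with hhdef
    have hh0 : 0 ≤ h := le_inf hg0 hr0
    have hhe : h ⊓ e = 0 := by
      refine le_antisymm ?_ (le_inf hh0 he0)
      calc h ⊓ e ≤ r ⊓ e := inf_le_inf_right e inf_le_right
        _ = 0 := hre
    have hhd : h ≤ d := by
      refine le_trans (le_inf ?_ (inf_le_right.trans hru)) hxd
      calc h ≤ g := inf_le_left
        _ ≤ |x| := by
            rw [hgdef, posPart_def]
            exact sup_le (sub_le_self _ ha0) (abs_nonneg x)
    have hhb' : h ≤ b' := by
      calc h ≤ h ⊓ (e + b') := le_inf le_rfl (hhd.trans hde)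
        _ ≤ h ⊓ e + h ⊓ b' := aux_inf_add E h e b' hh0 he0 hb'0
        _ = h ⊓ b' := by rw [hhe, zero_add]
        _ ≤ b' := inf_le_right
    have hhg' : h ⊓ g' = 0 := by
      refine le_antisymm ?_ (le_inf hh0 hg'0)
      calc h ⊓ g' ≤ g ⊓ g' := inf_le_inf_right g' inf_le_left
        _ = 0 := hgg'
    have h8 : h ≤ 0 := by
      calc h ≤ h ⊓ (e + g') := le_inf le_rfl (hhb'.trans hhalf)
        _ ≤ h ⊓ e + h ⊓ g' := aux_inf_add E h e g' hh0 he0 hg'0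
        _ = 0 := by rw [hhe, hhg', add_zero]
    exact le_antisymm h8 hh0
  have hx₂r : |x₂| ⊓ r = 0 :=
    le_antisymm ((inf_le_inf_right r hx₂g).trans_eq hgr) (le_inf (abs_nonneg _) hr0)
  have hTx₂r : |T x₂| ⊓ r = 0 := by
    have h9 := hT x₂ r (by rwa [abs_of_nonneg hr0])
    rwa [abs_of_nonneg hr0] at h9
  have hpbound : p ≤ (2*((n:ℝ)+1)) • d := by
    have h14 : δ⁻¹ = 2*((n:ℝ)+1) := by
      rw [hδdef, hεdef, inv_div, division_def, inv_inv]
    have hkey : ∀ k : ℕ, u ⊓ ((k:ℝ) • e) ≤ (2*((n:ℝ)+1)) • d := by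
      intro k
      have h10 : δ • (u ⊓ ((k:ℝ) • e)) = b' ⊓ ((δ * (k:ℝ)) • e) := by
        rw [aux_smul_inf E δ hδ, smul_smul, hb'def]
      have h11 : b' ⊓ ((δ * (k:ℝ)) • e) ≤ d := by
        rw [hedef]
        exact aux_trunc E b' d hd _ (by positivity)
      have h12 : δ • (u ⊓ ((k:ℝ) • e)) ≤ d := by rw [h10]; exact h11
      have h13 := smul_le_smul_of_nonneg_left h12 (inv_nonneg.mpr hδ.le)
      rwa [inv_smul_smul₀ hδ.ne', h14] at h13
    exact csSup_le hSne (by rintro _ ⟨k, rfl⟩; exact hkey k)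
  have hxsum : T x = T x₁ + T x₂ := by
    rw [← map_add]; congr 1; rw [hx₂def]; abel
  have habs : |T x| ≤ |T x₁| + |T x₂| := by
    rw [hxsum]; exact abs_add_le _ _
  calc |T x| ⊓ u ≤ (|T x₁| + |T x₂|) ⊓ u := inf_le_inf_right u habs
    _ ≤ (|T x₁| + |T x₂|) ⊓ (|T x₁| + u) :=
        le_inf inf_le_left (inf_le_right.trans (le_add_of_nonneg_left (abs_nonneg _)))
    _ = |T x₁| + (|T x₂| ⊓ u) := (add_inf _ _ _).symm
    _ ≤ ε • m + (|T x₂| ⊓ u) := add_le_add_left hTx₁ _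
    _ = ε • m + (|T x₂| ⊓ (p + r)) := by rw [← hupr]
    _ ≤ ε • m + ((|T x₂| ⊓ p) + (|T x₂| ⊓ r)) :=
        add_le_add_right (aux_inf_add E _ p r (abs_nonneg _) hp0 hr0) _
    _ = ε • m + (|T x₂| ⊓ p) := by rw [hTx₂r, add_zero]
    _ ≤ ε • m + p := add_le_add_right inf_le_right _
    _ ≤ ε • m + (2*((n:ℝ)+1)) • d := add_le_add_right hpbound _


/-- orthomorphisms of a Dedekind complete vector lattice preserve unbounded
order convergence: if `x i → 0` in unbounded order, then `T (x i) → 0` in unbounded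
order. -/
theorem stmt17
    (T : E →ₗ[ℝ] E) (hT : IsOrthomorphism E T)
    {ι : Type*} [Preorder ι] (x : ι → E) (hx : UOConvNet E x 0) :
    UOConvNet E (fun i => T (x i)) 0 := by
  intro u hu
  -- uniform bound for T on [-u, u]
  obtain ⟨c, d₀, hcd⟩ := hT.1 (-u) u
  set m : E := |c| ⊔ |d₀| with hmdef
  have hm0 : 0 ≤ m := (abs_nonneg c).trans le_sup_left
  have hm : ∀ z : E, |z| ≤ u → |T z| ≤ m := by
    intro z hz
    obtain ⟨hz1, hz2⟩ := abs_le'.mp hz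
    have hz3 : -u ≤ z := by have := neg_le_neg_iff.mpr hz2; rwa [neg_neg] at this
    obtain ⟨h1, h2⟩ := hcd z hz3 hz1
    refine abs_le'.mpr ⟨h2.trans ((le_abs_self d₀).trans le_sup_right), ?_⟩
    exact (neg_le_neg_iff.mpr h1).trans ((neg_le_abs c).trans le_sup_left)
  obtain ⟨D, hDne, hDdir, hDglb, hDtail⟩ := hx u hu
  have hd0 : ∀ d ∈ D, (0:E) ≤ d := fun d hd => hDglb.1 hd
  set β : E → E := fun d =>
    sInf (Set.range fun n : ℕ => ((n:ℝ)+1)⁻¹ • m + (2*((n:ℝ)+1)) • d) with hβdef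
  have hRne : ∀ d : E, (Set.range fun n : ℕ =>
      ((n:ℝ)+1)⁻¹ • m + (2*((n:ℝ)+1)) • d).Nonempty := fun d => ⟨_, ⟨0, rfl⟩⟩
  have hcoefpos : ∀ n : ℕ, (0:ℝ) < ((n:ℝ)+1)⁻¹ := fun n => by positivity
  have hcoefpos2 : ∀ n : ℕ, (0:ℝ) < 2*((n:ℝ)+1) := fun n => by positivity
  have hRnonneg : ∀ d : E, 0 ≤ d → ∀ z ∈ (Set.range fun n : ℕ =>
      ((n:ℝ)+1)⁻¹ • m + (2*((n:ℝ)+1)) • d), (0:E) ≤ z := by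
    rintro d hd _ ⟨n, rfl⟩
    exact add_nonneg (smul_nonneg (hcoefpos n).le hm0) (smul_nonneg (hcoefpos2 n).le hd)
  have hRbdd : ∀ d : E, 0 ≤ d → BddBelow (Set.range fun n : ℕ =>
      ((n:ℝ)+1)⁻¹ • m + (2*((n:ℝ)+1)) • d) := fun d hd => ⟨0, fun z hz => hRnonneg d hd z hz⟩
  have hβ0 : ∀ d ∈ D, (0:E) ≤ β d := fun d hd =>
    le_csInf (hRne d) (fun z hz => hRnonneg d (hd0 d hd) z hz)
  have hβle : ∀ d, 0 ≤ d → ∀ n : ℕ, β d ≤ ((n:ℝ)+1)⁻¹ • m + (2*((n:ℝ)+1)) • d :=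
    fun d hd n => csInf_le (hRbdd d hd) ⟨n, rfl⟩
  have hβmono : ∀ d' d : E, 0 ≤ d' → d' ≤ d → β d' ≤ β d := by
    intro d' d hd' hle
    refine le_csInf (hRne d) ?_
    rintro _ ⟨n, rfl⟩
    refine (hβle d' hd' n).trans (add_le_add_right ?_ _)
    have h0 : (0:E) ≤ ((2*((n:ℝ)+1)) • d - (2*((n:ℝ)+1)) • d') := by
      rw [← smul_sub]
      exact smul_nonneg (hcoefpos2 n).le (sub_nonneg.mpr hle)
    exact sub_nonneg.mp h0
  refine ⟨β '' D, hDne.image β, ?_, ⟨?_, ?_⟩, ?_⟩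
  · rintro _ ⟨d₁, h₁, rfl⟩ _ ⟨d₂, h₂, rfl⟩
    obtain ⟨d₃, h₃, h31, h32⟩ := hDdir d₁ h₁ d₂ h₂
    exact ⟨β d₃, ⟨d₃, h₃, rfl⟩, hβmono d₃ d₁ (hd0 d₃ h₃) h31, hβmono d₃ d₂ (hd0 d₃ h₃) h32⟩
  · rintro _ ⟨d, hd, rfl⟩
    exact hβ0 d hd
  · -- greatest lower bound
    intro v hv
    have hv' : ∀ d ∈ D, ∀ n : ℕ, v ≤ ((n:ℝ)+1)⁻¹ • m + (2*((n:ℝ)+1)) • d := by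
      intro d hd n
      exact (hv ⟨d, hd, rfl⟩).trans (hβle d (hd0 d hd) n)
    have h1 : ∀ n : ℕ, v ≤ ((n:ℝ)+1)⁻¹ • m := by
      intro n
      set cc : ℝ := 2*((n:ℝ)+1) with hccdef
      have hcc : 0 < cc := hcoefpos2 n
      have hlow : ∀ d ∈ D, cc⁻¹ • (v - ((n:ℝ)+1)⁻¹ • m) ≤ d := by
        intro d hd
        have h2 : v - ((n:ℝ)+1)⁻¹ • m ≤ cc • d := sub_le_iff_le_add'.mpr (hv' d hd n)
        have h3 := smul_le_smul_of_nonneg_left h2 (inv_nonneg.mpr hcc.le)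
        rwa [inv_smul_smul₀ hcc.ne'] at h3
      have h4 : cc⁻¹ • (v - ((n:ℝ)+1)⁻¹ • m) ≤ 0 := hDglb.2 hlow
      have h5 := smul_le_smul_of_nonneg_left h4 hcc.le
      rw [smul_inv_smul₀ hcc.ne', smul_zero] at h5
      exact sub_nonpos.mp h5
    have h2 : ∀ n : ℕ, ((n:ℝ)+1) • v⁺ ≤ m := by
      intro n
      have h3 : v⁺ ≤ ((n:ℝ)+1)⁻¹ • m := by
        rw [posPart_def]
        exact sup_le (h1 n) (smul_nonneg (hcoefpos n).le hm0)
      have h4 := smul_le_smul_of_nonneg_left h3 (by positivity : (0:ℝ) ≤ (n:ℝ)+1)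
      rwa [smul_inv_smul₀ (by positivity : ((n:ℝ)+1) ≠ 0)] at h4
    exact (le_posPart v).trans (aux_arch E v⁺ m hm0 h2)
  · -- eventual domination
    rintro _ ⟨d, hd, rfl⟩
    obtain ⟨i₀, hi⟩ := hDtail d hd
    refine ⟨i₀, fun i hii => ?_⟩
    have h1 := hi i hii
    simp only [sub_zero] at h1 ⊢
    rw [abs_of_nonneg (le_inf (abs_nonneg _) hu)] at h1
    rw [abs_of_nonneg (le_inf (abs_nonneg _) hu)]
    refine le_csInf (hRne d) ?_
    rintro _ ⟨n, rfl⟩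
    exact aux_core E T hT.2 u m hu hm d (hd0 d hd) n (x i) h1
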